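/- Fix integers r ≥ 1, an unbounded nondecreasing availability function t : ℕ → ℕ, and a constant c ≥ 3/2. For each n, let p_n = 1 − (c·log₂ n / t(n))^{1/r} (assume n is large enough that 0 < c·log₂ n / t(n) < 1), and suppose every index i ∈ {1, …, n} has t(n) pairwise disjoint recovery sets of size r in {1, …, n} \ {i}. Call an erasure pattern Z ∈ {0,1}^n of Hamming weight w_n = p_n·n uncorrectable if there exists an index i all of whose recovery sets contain at least one coordinate u with Z_u = 1. Then the fraction (number of uncorrectable weight-w_n patterns)/(number of all weight-w_n patterns) tends to 0 as n → ∞. -/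

import Mathlib

open Finset Filter

/-- The Hamming weight of an erasure pattern in `{0,1}^n`: its number of
coordinates equal to `1` (`true`). -/
def erasureWt {n : ℕ} (Z : Fin n → Bool) : ℕ :=
  (univ.filter (fun u => Z u = true)).card

lemma descFactorial_mul_pow_le (k : ℕ) : ∀ (a b M : ℕ), (∀ i < k, M ≤ b - i) →
    a.descFactorial k * M ^ k ≤ b.descFactorial k * a ^ k := by
  induction k with
  | zero => simp
  | succ k ih =>
    intro a b M h
    have h1 : (a - k) * M ≤ a * (b - k) :=
      Nat.mul_le_mul (Nat.sub_le a k) (h k (Nat.lt_succ_self k))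
    have h2 := ih a b M (fun i hi => h i (hi.trans (Nat.lt_succ_self k)))
    calc a.descFactorial (k+1) * M ^ (k+1)
        = ((a - k) * M) * (a.descFactorial k * M ^ k) := by
          rw [Nat.descFactorial_succ]; ring
      _ ≤ (a * (b - k)) * (b.descFactorial k * a ^ k) := Nat.mul_le_mul h1 h2
      _ = b.descFactorial (k+1) * a ^ (k+1) := by rw [Nat.descFactorial_succ]; ring

lemma choose_mul_pow_le' {k a b M : ℕ} (h : ∀ i < k, M ≤ b - i) :
    a.choose k * M ^ k ≤ b.choose k * a ^ k := by
  have := descFactorial_mul_pow_le k a b M h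
  rw [Nat.descFactorial_eq_factorial_mul_choose, Nat.descFactorial_eq_factorial_mul_choose] at this
  have hk : 0 < k.factorial := Nat.factorial_pos k
  have : k.factorial * (a.choose k * M ^ k) ≤ k.factorial * (b.choose k * a ^ k) := by
    calc k.factorial * (a.choose k * M ^ k) = k.factorial * a.choose k * M ^ k := by ring
      _ ≤ k.factorial * b.choose k * a ^ k := this
      _ = k.factorial * (b.choose k * a ^ k) := by ring
  exact Nat.le_of_mul_le_mul_left this hk


lemma step_s' {n : ℕ} (m r : ℕ) (hrm : r ≤ m) (S : Finset (Fin n)) (hS : S.card = r)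
    (Pred : Finset (Fin n) → Prop) [DecidablePred Pred]
    (hPred : ∀ M0 M1 : Finset (Fin n), M1 \ S ⊆ M0 → Pred M0 → Pred M1)
    (s : ℕ) (hs : s < r) :
    ((Finset.powersetCard m (univ : Finset (Fin n))).filter
        (fun M => (Pred M ∧ ¬ S ⊆ M) ∧ (M ∩ S).card = s)).card * Nat.choose (m - s) (r - s)
    ≤ ((Finset.powersetCard m (univ : Finset (Fin n))).filter
        (fun M => Pred M ∧ S ⊆ M)).card
        * (Nat.choose r s * Nat.choose (n - m) (r - s)) := by
  classical
  set b0s := (Finset.powersetCard m (univ : Finset (Fin n))).filter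
      (fun M => (Pred M ∧ ¬ S ⊆ M) ∧ (M ∩ S).card = s) with hb0s
  set b1 := (Finset.powersetCard m (univ : Finset (Fin n))).filter
      (fun M => Pred M ∧ S ⊆ M) with hb1
  have key := Finset.card_mul_le_card_mul
    (fun M0 M1 : Finset (Fin n) => S ⊆ M1 ∧ M1 \ S ⊆ M0)
    (s := b0s) (t := b1) (m := Nat.choose (m - s) (r - s))
    (n := Nat.choose r s * Nat.choose (n - m) (r - s))
    ?_ ?_
  · exact key
  · -- lower bound on degree of M0
    intro M0 hM0
    simp only [hb0s, mem_filter, Finset.mem_powersetCard] at hM0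
    obtain ⟨⟨_, hM0card⟩, ⟨hPredM0, hnotsub⟩, hints⟩ := hM0
    have hsd : (M0 \ S).card = m - s := by
      have := card_inter_add_card_sdiff M0 S
      omega
    have hcsource : (Finset.powersetCard (m - r) (M0 \ S)).card
        = Nat.choose (m - s) (r - s) := by
      rw [Finset.card_powersetCard, hsd]
      have : (m - s) - (r - s) = m - r := by omega
      rw [← this, Nat.choose_symm (by omega)]
    rw [← hcsource]
    unfold Finset.bipartiteAbove
    apply Finset.card_le_card_of_injOn (fun P => S ∪ P)
    · intro P hP
      rw [Finset.mem_coe, Finset.mem_powersetCard] at hP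
      obtain ⟨hPsub, hPcard⟩ := hP
      have hPdisj : Disjoint S P := by
        refine Finset.disjoint_left.mpr ?_
        intro a haS haP
        exact (Finset.mem_sdiff.mp (hPsub haP)).2 haS
      have hPM0 : P ⊆ M0 := hPsub.trans Finset.sdiff_subset
      have hdiff : (S ∪ P) \ S ⊆ M0 := by
        intro a ha
        rw [Finset.mem_sdiff, Finset.mem_union] at ha
        rcases ha with ⟨h1 | h1, h2⟩
        · exact absurd h1 h2
        · exact hPM0 h1
      simp only [Finset.mem_coe, mem_filter, Finset.mem_powersetCard, hb1]
      refine ⟨⟨⟨Finset.subset_univ _, ?_⟩, hPred M0 (S ∪ P) hdiff hPredM0,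
        Finset.subset_union_left⟩, Finset.subset_union_left, hdiff⟩
      rw [Finset.card_union_of_disjoint hPdisj, hS, hPcard]
      omega
    · intro P hP Q hQ hPQ
      rw [Finset.mem_coe, Finset.mem_powersetCard] at hP hQ
      have hPd : ∀ x ∈ P, x ∉ S := by
        intro x hx; exact (Finset.mem_sdiff.mp (hP.1 hx)).2
      have hQd : ∀ x ∈ Q, x ∉ S := by
        intro x hx; exact (Finset.mem_sdiff.mp (hQ.1 hx)).2
      have hPQ' : S ∪ P = S ∪ Q := hPQ
      ext a
      constructor
      · intro ha
        have h0 : a ∈ S ∪ Q := hPQ' ▸ (Finset.mem_union_right S ha : a ∈ S ∪ P)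
        rcases Finset.mem_union.mp h0 with h | h
        · exact absurd h (hPd a ha)
        · exact h
      · intro ha
        have h0 : a ∈ S ∪ P := hPQ'.symm ▸ (Finset.mem_union_right S ha : a ∈ S ∪ Q)
        rcases Finset.mem_union.mp h0 with h | h
        · exact absurd h (hQd a ha)
        · exact h
  · -- upper bound on degree of M1
    intro M1 hM1
    simp only [hb1, mem_filter, Finset.mem_powersetCard] at hM1
    obtain ⟨⟨_, hM1card⟩, hPredM1, hSsub⟩ := hM1
    have htarget : ((Finset.powersetCard s S) ×ˢ
        (Finset.powersetCard (r - s) (univ \ M1))).card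
        = Nat.choose r s * Nat.choose (n - m) (r - s) := by
      rw [Finset.card_product, Finset.card_powersetCard, Finset.card_powersetCard, hS]
      congr 2
      rw [Finset.card_sdiff_of_subset (Finset.subset_univ _), Finset.card_univ, Fintype.card_fin,
        hM1card]
    rw [← htarget]
    unfold Finset.bipartiteBelow
    apply Finset.card_le_card_of_injOn (fun M0 => (M0 ∩ S, M0 \ M1))
    · intro M0 hM0
      simp only [Finset.mem_coe, hb0s, mem_filter, Finset.mem_powersetCard] at hM0
      obtain ⟨⟨⟨_, hM0card⟩, ⟨hPredM0, hnotsub⟩, hints⟩, hrel1, hrel2⟩ := hM0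
      have hinter : M0 ∩ M1 = (M1 \ S) ∪ (M0 ∩ S) := by
        ext a
        simp only [Finset.mem_inter, Finset.mem_union, Finset.mem_sdiff]
        constructor
        · rintro ⟨h1, h2⟩
          by_cases haS : a ∈ S
          · exact Or.inr ⟨h1, haS⟩
          · exact Or.inl ⟨h2, haS⟩
        · rintro (⟨h1, h2⟩ | ⟨h1, h2⟩)
          · exact ⟨hrel2 (Finset.mem_sdiff.mpr ⟨h1, h2⟩), h1⟩
          · exact ⟨h1, hSsub h2⟩
      have hdisj2 : Disjoint (M1 \ S) (M0 ∩ S) := by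
        refine Finset.disjoint_left.mpr ?_
        intro a ha hb
        exact (Finset.mem_sdiff.mp ha).2 (Finset.mem_inter.mp hb).2
      have hM1S : (M1 \ S).card = m - r := by
        rw [Finset.card_sdiff_of_subset hSsub, hM1card, hS]
      have hintercard : (M0 ∩ M1).card = (m - r) + s := by
        rw [hinter, Finset.card_union_of_disjoint hdisj2, hM1S, hints]
      have hdiffcard : (M0 \ M1).card = r - s := by
        have := card_inter_add_card_sdiff M0 M1
        omega
      simp only [Finset.mem_coe, Finset.mem_product, Finset.mem_powersetCard]
      exact ⟨⟨Finset.inter_subset_right, hints⟩,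
        ⟨fun a ha => Finset.mem_sdiff.mpr
          ⟨Finset.mem_univ a, (Finset.mem_sdiff.mp ha).2⟩, hdiffcard⟩⟩
    · intro M0 hM0 M0' hM0' heq
      simp only [Finset.coe_filter, Set.mem_setOf_eq, hb0s, mem_filter,
        Finset.mem_powersetCard] at hM0 hM0'
      obtain ⟨⟨_, ⟨_, _⟩, _⟩, hrelA1, hrelA2⟩ := hM0
      obtain ⟨⟨_, ⟨_, _⟩, _⟩, hrelB1, hrelB2⟩ := hM0'
      have h1 : M0 ∩ S = M0' ∩ S := congrArg Prod.fst heq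
      have h2 : M0 \ M1 = M0' \ M1 := congrArg Prod.snd heq
      have hrec : ∀ (X : Finset (Fin n)), X \ M1 ⊆ X → S ⊆ M1 →
          (M1 \ S ⊆ X) → X = (M1 \ S) ∪ (X ∩ S) ∪ (X \ M1) := by
        intro X _ hS1 hX1
        ext a
        simp only [Finset.mem_union, Finset.mem_sdiff, Finset.mem_inter]
        constructor
        · intro ha
          by_cases haM1 : a ∈ M1
          · by_cases haS : a ∈ S
            · exact Or.inl (Or.inr ⟨ha, haS⟩)
            · exact Or.inl (Or.inl ⟨haM1, haS⟩)
          · exact Or.inr ⟨ha, haM1⟩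
        · rintro ((⟨h3, h4⟩ | ⟨h3, h4⟩) | ⟨h3, h4⟩)
          · exact hX1 (Finset.mem_sdiff.mpr ⟨h3, h4⟩)
          · exact h3
          · exact h3
      have e1 := hrec M0 Finset.sdiff_subset hrelA1 hrelA2
      have e2 := hrec M0' Finset.sdiff_subset hrelB1 hrelB2
      rw [e1, e2, h1, h2]


lemma step_nat' {n : ℕ} (m r : ℕ) (hr : 1 ≤ r) (hrm : r ≤ m) (hmn : m ≤ n)
    (S : Finset (Fin n)) (hS : S.card = r)
    (Pred : Finset (Fin n) → Prop) [DecidablePred Pred]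
    (hPred : ∀ M0 M1 : Finset (Fin n), M1 \ S ⊆ M0 → Pred M0 → Pred M1) :
    ((Finset.powersetCard m (univ : Finset (Fin n))).filter
        (fun M => Pred M ∧ ¬ S ⊆ M)).card * (m - r + 1) ^ r
    ≤ ((Finset.powersetCard m (univ : Finset (Fin n))).filter
        (fun M => Pred M ∧ S ⊆ M)).card * ((n - r + 1) ^ r - (m - r + 1) ^ r) := by
  classical
  set M' := m - r + 1 with hM'
  set b0 := (Finset.powersetCard m (univ : Finset (Fin n))).filter
      (fun M => Pred M ∧ ¬ S ⊆ M) with hb0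
  set b1 := (Finset.powersetCard m (univ : Finset (Fin n))).filter
      (fun M => Pred M ∧ S ⊆ M) with hb1
  -- fiberwise decomposition
  have hfib : b0.card = ∑ s ∈ range r, (b0.filter (fun M => (M ∩ S).card = s)).card := by
    apply Finset.card_eq_sum_card_fiberwise
    intro M hM
    rw [hb0, Finset.mem_coe, mem_filter] at hM
    rw [Finset.mem_coe, Finset.mem_range]
    have hsub : M ∩ S ⊆ S := Finset.inter_subset_right
    have hle : (M ∩ S).card ≤ r := hS ▸ Finset.card_le_card hsub
    rcases Nat.lt_or_ge (M ∩ S).card r with h | h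
    · exact h
    · exfalso
      have : M ∩ S = S := Finset.eq_of_subset_of_card_le hsub (by omega)
      refine hM.2.2 (fun a ha => ?_)
      have haM : a ∈ M ∩ S := by rw [this]; exact ha
      exact (Finset.mem_inter.mp haM).1
  -- per-fiber bound
  have hper : ∀ s ∈ range r,
      (b0.filter (fun M => (M ∩ S).card = s)).card * M' ^ r
      ≤ b1.card * (Nat.choose r s * (n - m) ^ (r - s) * M' ^ s) := by
    intro s hs
    rw [Finset.mem_range] at hs
    have h1 : (b0.filter (fun M => (M ∩ S).card = s)).card * Nat.choose (m - s) (r - s)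
        ≤ b1.card * (Nat.choose r s * Nat.choose (n - m) (r - s)) := by
      have := step_s' m r hrm S hS Pred hPred s hs
      rw [hb0, Finset.filter_filter]
      exact this
    have h2 : Nat.choose (n - m) (r - s) * M' ^ (r - s)
        ≤ Nat.choose (m - s) (r - s) * (n - m) ^ (r - s) :=
      choose_mul_pow_le' (fun i hi => by omega)
    have hCpos : 0 < Nat.choose (m - s) (r - s) := Nat.choose_pos (by omega)
    set a0 := (b0.filter (fun M => (M ∩ S).card = s)).card
    set C := Nat.choose (m - s) (r - s)
    have hx : C * (a0 * M' ^ r)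
        ≤ C * (b1.card * (Nat.choose r s * (n - m) ^ (r - s) * M' ^ s)) := by
      have e1 : C * (a0 * M' ^ r) = (a0 * C) * (M' ^ (r - s) * M' ^ s) := by
        rw [← pow_add]
        have hrs : r - s + s = r := by omega
        rw [hrs]; ring
      have e2 : (a0 * C) * (M' ^ (r - s) * M' ^ s)
          ≤ (b1.card * (Nat.choose r s * Nat.choose (n - m) (r - s)))
            * (M' ^ (r - s) * M' ^ s) := Nat.mul_le_mul_right _ h1
      have e3 : (b1.card * (Nat.choose r s * Nat.choose (n - m) (r - s)))
            * (M' ^ (r - s) * M' ^ s)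
          = (b1.card * Nat.choose r s * M' ^ s)
            * (Nat.choose (n - m) (r - s) * M' ^ (r - s)) := by ring
      have e4 : (b1.card * Nat.choose r s * M' ^ s)
            * (Nat.choose (n - m) (r - s) * M' ^ (r - s))
          ≤ (b1.card * Nat.choose r s * M' ^ s) * (C * (n - m) ^ (r - s)) :=
        Nat.mul_le_mul_left _ h2
      have e5 : (b1.card * Nat.choose r s * M' ^ s) * (C * (n - m) ^ (r - s))
          = C * (b1.card * (Nat.choose r s * (n - m) ^ (r - s) * M' ^ s)) := by ring
      omega
    exact Nat.le_of_mul_le_mul_left hx hCpos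
  -- sum the fibers
  have hsum : ∑ s ∈ range r, Nat.choose r s * (n - m) ^ (r - s) * M' ^ s
      = (n - r + 1) ^ r - M' ^ r := by
    have hbin := add_pow M' (n - m) r
    rw [Finset.sum_range_succ] at hbin
    simp only [Nat.choose_self, Nat.sub_self, pow_zero, mul_one, Nat.cast_id] at hbin
    have hadd : M' + (n - m) = n - r + 1 := by omega
    rw [hadd] at hbin
    have : ∀ s ∈ range r, M' ^ s * (n - m) ^ (r - s) * (Nat.choose r s)
        = Nat.choose r s * (n - m) ^ (r - s) * M' ^ s := by intro s _; ring
    rw [Finset.sum_congr rfl this] at hbin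
    omega
  calc b0.card * M' ^ r
      = ∑ s ∈ range r, (b0.filter (fun M => (M ∩ S).card = s)).card * M' ^ r := by
        rw [hfib, Finset.sum_mul]
    _ ≤ ∑ s ∈ range r, b1.card * (Nat.choose r s * (n - m) ^ (r - s) * M' ^ s) :=
        Finset.sum_le_sum hper
    _ = b1.card * ((n - r + 1) ^ r - M' ^ r) := by
        rw [← Finset.mul_sum, hsum]


lemma bad_card_le' {n m r T : ℕ} (hr : 1 ≤ r) (hrm : r ≤ m) (hmn : m ≤ n)
    (S : Fin T → Finset (Fin n))
    (hd : ∀ j j', j ≠ j' → Disjoint (S j) (S j'))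
    (hc : ∀ j, (S j).card = r) :
    (((Finset.powersetCard m (univ : Finset (Fin n))).filter
        (fun M => ∀ j, ¬ S j ⊆ M)).card : ℝ)
    ≤ (1 - (((m - r + 1 : ℕ) : ℝ) / ((n - r + 1 : ℕ) : ℝ)) ^ r) ^ T
      * ((Finset.powersetCard m (univ : Finset (Fin n))).card : ℝ) := by
  classical
  set M' : ℕ := m - r + 1 with hM'
  set N' : ℕ := n - r + 1 with hN'
  have hM'N' : M' ≤ N' := by omega
  have hN'pos : (0:ℝ) < (N' : ℝ) := by positivity
  have hM'pos : (0:ℝ) < (M' : ℝ) := by positivity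
  set x : ℝ := (M' : ℝ) / (N' : ℝ) with hx
  have hx0 : 0 < x := by positivity
  have hx1 : x ≤ 1 := by
    rw [hx, div_le_one hN'pos]; exact_mod_cast hM'N'
  have hrho0 : 0 ≤ 1 - x ^ r := by
    have : x ^ r ≤ 1 := pow_le_one₀ hx0.le hx1
    linarith
  set g : ℕ → ℕ := fun k =>
    ((Finset.powersetCard m (univ : Finset (Fin n))).filter
      (fun M => ∀ j : Fin T, (j : ℕ) < k → ¬ S j ⊆ M)).card with hg
  have hg0 : g 0 = (Finset.powersetCard m (univ : Finset (Fin n))).card := by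
    rw [hg]
    simp only [Nat.not_lt_zero, false_implies, implies_true, Finset.filter_true_of_mem,
      implies_true]
  have hstep : ∀ k, k < T → (g (k + 1) : ℝ) ≤ (1 - x ^ r) * g k := by
    intro k hk
    set Pred : Finset (Fin n) → Prop :=
      fun M => ∀ j : Fin T, (j : ℕ) < k → ¬ S j ⊆ M with hPreddef
    have hPred : ∀ M0 M1 : Finset (Fin n), M1 \ S ⟨k, hk⟩ ⊆ M0 → Pred M0 → Pred M1 := by
      intro M0 M1 hsub hP j hj hSj
      have hne : j ≠ ⟨k, hk⟩ := by
        intro h; rw [h] at hj; simp at hj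
      have hdj := hd j ⟨k, hk⟩ hne
      have : S j ⊆ M0 := by
        intro a ha
        refine hsub (Finset.mem_sdiff.mpr ⟨hSj ha, ?_⟩)
        exact Finset.disjoint_left.mp hdj ha
      exact hP j hj this
    have hkey := step_nat' m r hr hrm hmn (S ⟨k, hk⟩) (hc _) Pred hPred
    set b0 := ((Finset.powersetCard m (univ : Finset (Fin n))).filter
        (fun M => Pred M ∧ ¬ S ⟨k, hk⟩ ⊆ M)) with hb0
    set b1 := ((Finset.powersetCard m (univ : Finset (Fin n))).filter
        (fun M => Pred M ∧ S ⟨k, hk⟩ ⊆ M)) with hb1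
    have hgk1 : g (k + 1) = b0.card := by
      show ((Finset.powersetCard m (univ : Finset (Fin n))).filter
        (fun M => ∀ j : Fin T, (j : ℕ) < k + 1 → ¬ S j ⊆ M)).card = b0.card
      rw [hb0]
      congr 1
      apply Finset.filter_congr
      intro M _
      simp only [hPreddef]
      constructor
      · intro h
        refine ⟨fun j hj => h j (by omega), h ⟨k, hk⟩ (by simp)⟩
      · rintro ⟨h1, h2⟩ j hj
        rcases Nat.lt_or_ge (j : ℕ) k with h | h
        · exact h1 j h
        · have : (j : ℕ) = k := by omega
          have : j = ⟨k, hk⟩ := Fin.ext this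
          rw [this]; exact h2
    have hgk : g k = b1.card + b0.card := by
      show ((Finset.powersetCard m (univ : Finset (Fin n))).filter Pred).card
        = b1.card + b0.card
      rw [hb0, hb1]
      rw [← Finset.filter_filter, ← Finset.filter_filter]
      exact (Finset.card_filter_add_card_filter_not
        (fun M => S ⟨k, hk⟩ ⊆ M)).symm
    -- cast key inequality to ℝ
    have hpowle : M' ^ r ≤ N' ^ r := Nat.pow_le_pow_left hM'N' r
    have hkeyR : (b0.card : ℝ) * (M' : ℝ) ^ r
        ≤ (b1.card : ℝ) * ((N' : ℝ) ^ r - (M' : ℝ) ^ r) := by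
      have := hkey
      have hcast : ((b0.card * M' ^ r : ℕ) : ℝ)
          ≤ ((b1.card * (N' ^ r - M' ^ r) : ℕ) : ℝ) := by exact_mod_cast this
      push_cast [Nat.cast_sub hpowle] at hcast
      convert hcast using 2 <;> push_cast <;> ring
    have hxr : x ^ r = (M' : ℝ) ^ r / (N' : ℝ) ^ r := div_pow _ _ r
    have hNrpos : (0:ℝ) < (N' : ℝ) ^ r := by positivity
    rw [hgk1, hgk]
    push_cast
    rw [hxr]
    have hYne : ((N' : ℝ)) ^ r ≠ 0 := ne_of_gt hNrpos
    rw [show (1 - (M' : ℝ) ^ r / (N' : ℝ) ^ r)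
        = (((N' : ℝ) ^ r - (M' : ℝ) ^ r) / (N' : ℝ) ^ r) by field_simp]
    rw [div_mul_eq_mul_div, le_div_iff₀ hNrpos]
    have hb0nn : (0:ℝ) ≤ (b0.card : ℝ) := Nat.cast_nonneg _
    have hpowleR : ((M' : ℝ)) ^ r ≤ ((N' : ℝ)) ^ r := by exact_mod_cast hpowle
    nlinarith [hkeyR]
  -- induction
  have hind : ∀ k, k ≤ T → (g k : ℝ) ≤ (1 - x ^ r) ^ k
      * ((Finset.powersetCard m (univ : Finset (Fin n))).card : ℝ) := by
    intro k
    induction k with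
    | zero => intro _; rw [hg0]; simp
    | succ k ih =>
      intro hk1
      have hk : k < T := by omega
      calc (g (k+1) : ℝ) ≤ (1 - x ^ r) * g k := hstep k hk
        _ ≤ (1 - x ^ r) * ((1 - x ^ r) ^ k
            * ((Finset.powersetCard m (univ : Finset (Fin n))).card : ℝ)) := by
          apply mul_le_mul_of_nonneg_left (ih (by omega)) hrho0
        _ = (1 - x ^ r) ^ (k+1)
            * ((Finset.powersetCard m (univ : Finset (Fin n))).card : ℝ) := by ring
  have hfinal := hind T le_rfl
  have hgT : g T = ((Finset.powersetCard m (univ : Finset (Fin n))).filter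
      (fun M => ∀ j, ¬ S j ⊆ M)).card := by
    show ((Finset.powersetCard m (univ : Finset (Fin n))).filter
      (fun M => ∀ j : Fin T, (j : ℕ) < T → ¬ S j ⊆ M)).card = _
    congr 1
    apply Finset.filter_congr
    intro M _
    constructor
    · intro h j; exact h j j.isLt
    · intro h j _; exact h j
  rw [hgT] at hfinal
  exact hfinal


lemma card_wt_filter' {n : ℕ} (w : ℕ) (hwn : w ≤ n)
    (P : (Fin n → Bool) → Prop) [DecidablePred P]
    (Q : Finset (Fin n) → Prop) [DecidablePred Q]
    (hPQ : ∀ Z : Fin n → Bool, P Z ↔ Q (univ.filter (fun u => Z u = false))) :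
    ((univ : Finset (Fin n → Bool)).filter (fun Z => erasureWt Z = w ∧ P Z)).card
    = ((Finset.powersetCard (n - w) (univ : Finset (Fin n))).filter Q).card := by
  classical
  have hsplit : ∀ Z : Fin n → Bool,
      (univ.filter (fun u => Z u = false)).card + erasureWt Z = n := by
    intro Z
    unfold erasureWt
    rw [add_comm]
    have : ∀ u : Fin n, (Z u = false) ↔ ¬ (Z u = true) := by
      intro u; cases h : Z u <;> simp
    rw [Finset.filter_congr (fun u _ => this u)]
    rw [Finset.card_filter_add_card_filter_not (fun u => Z u = true)]
    simp
  refine Finset.card_bij'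
    (fun Z _ => univ.filter (fun u => Z u = false))
    (fun M _ => fun u => if u ∈ M then false else true)
    ?hi ?hj ?left ?right
  case hi =>
    intro Z hZ
    show univ.filter (fun u => Z u = false) ∈
      (Finset.powersetCard (n - w) (univ : Finset (Fin n))).filter Q
    have hZ' := hZ
    rw [mem_filter] at hZ'
    obtain ⟨_, hwt, hP⟩ := hZ'
    rw [mem_filter, Finset.mem_powersetCard]
    refine ⟨⟨Finset.subset_univ _, ?_⟩, (hPQ Z).mp hP⟩
    have := hsplit Z
    omega
  case hj =>
    intro M hM
    rw [mem_filter, Finset.mem_powersetCard] at hM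
    obtain ⟨⟨_, hMcard⟩, hQ⟩ := hM
    show (fun u => if u ∈ M then false else true) ∈
      (univ : Finset (Fin n → Bool)).filter (fun Z => erasureWt Z = w ∧ P Z)
    rw [mem_filter]
    have hfalse : univ.filter
        (fun u => (fun u => if u ∈ M then false else true) u = false) = M := by
      ext u
      simp only [mem_filter, Finset.mem_univ, true_and]
      by_cases h : u ∈ M <;> simp [h]
    refine ⟨Finset.mem_univ _, ?_, ?_⟩
    · have hs := hsplit (fun u => if u ∈ M then false else true)
      rw [hfalse, hMcard] at hs
      omega
    · exact (hPQ _).mpr (by rw [hfalse]; exact hQ)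
  case left =>
    intro Z hZ
    show (fun u => if u ∈ univ.filter (fun u => Z u = false) then false else true) = Z
    funext u
    by_cases h : Z u = false
    · simp [h]
    · simp only [mem_filter, Finset.mem_univ, true_and]
      rw [if_neg h]
      cases hu : Z u
      · exact absurd hu h
      · rfl
  case right =>
    intro M hM
    show univ.filter
      (fun u => (fun u => if u ∈ M then false else true) u = false) = M
    ext u
    simp only [mem_filter, Finset.mem_univ, true_and]
    by_cases h : u ∈ M <;> simp [h]

lemma den_pos' {n : ℕ} (w : ℕ) (hwn : w ≤ n) :
    0 < ((univ : Finset (Fin n → Bool)).filter (fun Z => erasureWt Z = w)).card := by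
  classical
  have h := card_wt_filter' (n := n) w hwn (fun _ => True) (fun _ => True) (by simp)
  simp only [and_true, Finset.filter_true_of_mem, fun _ => trivial] at h
  rw [Finset.filter_true_of_mem (fun _ _ => trivial)] at h
  rw [h, Finset.card_powersetCard, Finset.card_univ, Fintype.card_fin]
  exact Nat.choose_pos (by omega)


lemma sets_card_bound' {n r T : ℕ} (hn : 0 < n) (i : Fin n) (S : Fin T → Finset (Fin n))
    (hd : ∀ j j', j ≠ j' → Disjoint (S j) (S j'))
    (hni : ∀ j, i ∉ S j) (hc : ∀ j, (S j).card = r) : T * r ≤ n - 1 := by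
  classical
  have hsub : (univ : Finset (Fin T)).biUnion S ⊆ univ.erase i := by
    intro a ha
    rw [Finset.mem_biUnion] at ha
    obtain ⟨j, _, haj⟩ := ha
    rw [Finset.mem_erase]
    exact ⟨fun h => hni j (h ▸ haj), Finset.mem_univ a⟩
  have hcard := Finset.card_le_card hsub
  rw [Finset.card_biUnion (fun j _ j' _ h => hd j j' h)] at hcard
  simp only [hc, Finset.sum_const, Finset.card_univ, Fintype.card_fin, smul_eq_mul] at hcard
  rw [Finset.card_erase_of_mem (Finset.mem_univ i), Finset.card_univ, Fintype.card_fin] at hcard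
  exact hcard

lemma num_le' {n r w T : ℕ} (hr : 1 ≤ r) (hwn : w ≤ n) (hrm : r ≤ n - w)
    (S : Fin n → Fin T → Finset (Fin n))
    (hd : ∀ i (j j' : Fin T), j ≠ j' → Disjoint (S i j) (S i j'))
    (hc : ∀ i j, (S i j).card = r) :
    (((univ : Finset (Fin n → Bool)).filter (fun Z => erasureWt Z = w ∧
        ∃ i, ∀ j, ∃ u ∈ S i j, Z u = true)).card : ℝ)
    ≤ (n : ℝ) * (1 - (((n - w - r + 1 : ℕ) : ℝ) / ((n - r + 1 : ℕ) : ℝ)) ^ r) ^ T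
      * (((univ : Finset (Fin n → Bool)).filter (fun Z => erasureWt Z = w)).card : ℝ) := by
  classical
  set m := n - w with hm
  set ρ : ℝ := 1 - (((m - r + 1 : ℕ) : ℝ) / ((n - r + 1 : ℕ) : ℝ)) ^ r with hρ
  -- step A: union bound
  have hA : ((univ : Finset (Fin n → Bool)).filter (fun Z => erasureWt Z = w ∧
        ∃ i, ∀ j, ∃ u ∈ S i j, Z u = true)).card
      ≤ ∑ i ∈ (univ : Finset (Fin n)), ((univ : Finset (Fin n → Bool)).filter
        (fun Z => erasureWt Z = w ∧ ∀ j, ∃ u ∈ S i j, Z u = true)).card := by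
    refine le_trans (Finset.card_le_card ?_) Finset.card_biUnion_le
    intro Z hZ
    rw [mem_filter] at hZ
    obtain ⟨hZu, hwt, i, hi⟩ := hZ
    rw [Finset.mem_biUnion]
    exact ⟨i, Finset.mem_univ i, by rw [mem_filter]; exact ⟨hZu, hwt, hi⟩⟩
  -- step B: per-i identification
  have hB : ∀ i : Fin n, ((univ : Finset (Fin n → Bool)).filter
        (fun Z => erasureWt Z = w ∧ ∀ j, ∃ u ∈ S i j, Z u = true)).card
      = ((Finset.powersetCard m (univ : Finset (Fin n))).filter
        (fun M => ∀ j, ¬ S i j ⊆ M)).card := by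
    intro i
    apply card_wt_filter' w hwn
    intro Z
    constructor
    · intro h j hsub
      obtain ⟨u, hu, hZu⟩ := h j
      have := hsub hu
      rw [mem_filter] at this
      rw [this.2] at hZu
      exact Bool.false_ne_true hZu
    · intro h j
      have := h j
      rw [Finset.not_subset] at this
      obtain ⟨u, hu, hnu⟩ := this
      refine ⟨u, hu, ?_⟩
      by_contra hne
      exact hnu (by rw [mem_filter]; exact ⟨Finset.mem_univ u,
        by cases hZu : Z u; rfl; exact absurd hZu hne⟩)
  -- step C: denominator identification
  have hC : ((univ : Finset (Fin n → Bool)).filter (fun Z => erasureWt Z = w)).card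
      = (Finset.powersetCard m (univ : Finset (Fin n))).card := by
    have h := card_wt_filter' (n := n) w hwn (fun _ => True) (fun _ => True) (by simp)
    rw [Finset.filter_true_of_mem (fun _ _ => trivial)] at h
    rw [← h]
    congr 1
    apply Finset.filter_congr
    intro Z _
    simp
  -- combine
  have hD : ∀ i : Fin n, (((Finset.powersetCard m (univ : Finset (Fin n))).filter
        (fun M => ∀ j, ¬ S i j ⊆ M)).card : ℝ)
      ≤ ρ ^ T * ((Finset.powersetCard m (univ : Finset (Fin n))).card : ℝ) := by
    intro i
    exact bad_card_le' hr hrm (Nat.sub_le n w) (S i) (hd i) (hc i)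
  calc (((univ : Finset (Fin n → Bool)).filter (fun Z => erasureWt Z = w ∧
        ∃ i, ∀ j, ∃ u ∈ S i j, Z u = true)).card : ℝ)
      ≤ ∑ i ∈ (univ : Finset (Fin n)), (((univ : Finset (Fin n → Bool)).filter
        (fun Z => erasureWt Z = w ∧ ∀ j, ∃ u ∈ S i j, Z u = true)).card : ℝ) := by
        exact_mod_cast hA
    _ = ∑ i ∈ (univ : Finset (Fin n)), (((Finset.powersetCard m
          (univ : Finset (Fin n))).filter (fun M => ∀ j, ¬ S i j ⊆ M)).card : ℝ) := by
        refine Finset.sum_congr rfl (fun i _ => ?_)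
        exact_mod_cast hB i
    _ ≤ ∑ i ∈ (univ : Finset (Fin n)),
          ρ ^ T * ((Finset.powersetCard m (univ : Finset (Fin n))).card : ℝ) :=
        Finset.sum_le_sum (fun i _ => hD i)
    _ = (n : ℝ) * ρ ^ T * ((Finset.powersetCard m (univ : Finset (Fin n))).card : ℝ) := by
        rw [Finset.sum_const, Finset.card_univ, Fintype.card_fin, nsmul_eq_mul]; ring
    _ = (n : ℝ) * ρ ^ T
        * (((univ : Finset (Fin n → Bool)).filter (fun Z => erasureWt Z = w)).card : ℝ) := by
        rw [hC]


lemma final_bound (n T : ℕ) (c y : ℝ) (hn : 1 ≤ n) (hy0 : 0 ≤ y) (hy1 : y ≤ 1)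
    (hc : 3 / 2 ≤ c) (hlog : 0 ≤ Real.logb 2 n)
    (hTy : (9/10 : ℝ) * (c * Real.logb 2 n) ≤ (T:ℝ) * y) :
    (n:ℝ) * (1 - y) ^ T ≤ (n:ℝ) ^ (-(9/10 : ℝ)) := by
  have hnR : (0:ℝ) < n := by exact_mod_cast hn
  have hexp1 : (1 - y) ≤ Real.exp (-y) := by
    have := Real.add_one_le_exp (-y)
    linarith
  have hexp2 : (1 - y) ^ T ≤ Real.exp (-((T:ℝ) * y)) := by
    calc (1 - y) ^ T ≤ (Real.exp (-y))^T := pow_le_pow_left₀ (by linarith) hexp1 T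
      _ = Real.exp (-((T:ℝ) * y)) := by
        rw [← Real.exp_nat_mul]; congr 1; ring
  have hln2 : Real.log 2 < 0.6931471808 := Real.log_two_lt_d9
  have hln2pos : 0 < Real.log 2 := Real.log_pos one_lt_two
  have hlogn : Real.logb 2 n = Real.log n / Real.log 2 := rfl
  have hlogn0 : 0 ≤ Real.log n := Real.log_natCast_nonneg n
  have hexp3 : -((T:ℝ) * y) ≤ -(19/10 : ℝ) * Real.log n := by
    have h1 : (19/10 : ℝ) * Real.log n ≤ (9/10 : ℝ) * (c * Real.logb 2 n) := by
      rw [hlogn]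
      have h2 : (19/10 : ℝ) * Real.log 2 ≤ (9/10) * c := by nlinarith
      calc (19/10 : ℝ) * Real.log n
          = (19/10 * Real.log 2) * (Real.log n / Real.log 2) := by
            field_simp
        _ ≤ ((9/10) * c) * (Real.log n / Real.log 2) := by
            apply mul_le_mul_of_nonneg_right h2 (by positivity)
        _ = 9/10 * (c * (Real.log n / Real.log 2)) := by ring
    linarith
  have h1 : (n:ℝ) * (1 - y) ^ T ≤ (n:ℝ) * Real.exp (-(19/10:ℝ) * Real.log n) := by
    apply mul_le_mul_of_nonneg_left _ hnR.le
    calc (1 - y) ^ T ≤ Real.exp (-((T:ℝ) * y)) := hexp2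
      _ ≤ Real.exp (-(19/10:ℝ) * Real.log n) := Real.exp_le_exp.mpr hexp3
  have h2 : Real.exp (-(19/10:ℝ) * Real.log n) = (n:ℝ) ^ (-(19/10 : ℝ)) := by
    rw [Real.rpow_def_of_pos hnR]; congr 1; ring
  have h3 : (n:ℝ) * (n:ℝ) ^ (-(19/10 : ℝ)) = (n:ℝ) ^ (-(9/10 : ℝ)) := by
    rw [show ((n:ℝ) * (n:ℝ) ^ (-(19/10 : ℝ))) = (n:ℝ)^(1:ℝ) * (n:ℝ) ^ (-(19/10 : ℝ)) by
      rw [Real.rpow_one]]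
    rw [← Real.rpow_add hnR]
    norm_num
  rw [h2, h3] at h1
  exact h1


set_option maxHeartbeats 1000000 in
theorem mld_corrects_virtually_all_erasures_bec
    (r : ℕ) (hr : 1 ≤ r) (t : ℕ → ℕ) (hmono : Monotone t)
    (hunbounded : Tendsto t atTop atTop)
    (c : ℝ) (hc : 3 / 2 ≤ c)
    (hlarge : ∀ᶠ n : ℕ in atTop,
      0 < c * Real.logb 2 n / t n ∧ c * Real.logb 2 n / t n < 1)
    (R : (n : ℕ) → Fin n → Fin (t n) → Finset (Fin n))
    (hdisj : ∀ n (i : Fin n) (j j' : Fin (t n)), j ≠ j' → Disjoint (R n i j) (R n i j'))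
    (hnoti : ∀ n (i : Fin n) (j : Fin (t n)), i ∉ R n i j)
    (hcard : ∀ n (i : Fin n) (j : Fin (t n)), (R n i j).card = r)
    (w : ℕ → ℕ)
    (hw : ∀ n : ℕ, w n
      = ⌊(1 - (c * Real.logb 2 n / t n) ^ (1 / (r : ℝ))) * n⌋₊) :
    Tendsto
      (fun n : ℕ =>
        ((univ.filter (fun Z : Fin n → Bool => erasureWt Z = w n ∧
            ∃ i : Fin n, ∀ j : Fin (t n), ∃ u ∈ R n i j, Z u = true)).card : ℝ)
        / ((univ.filter (fun Z : Fin n → Bool => erasureWt Z = w n)).card : ℝ))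
      atTop (nhds 0) := by
  have hcpos : (0:ℝ) < c := lt_of_lt_of_le (by norm_num) hc
  have hrR : (1:ℝ) ≤ (r:ℝ) := by exact_mod_cast hr
  have hrne : (r:ℝ) ≠ 0 := by positivity
  have hlogb : Tendsto (fun n : ℕ => Real.logb 2 n) atTop atTop :=
    (Real.tendsto_logb_atTop one_lt_two).comp tendsto_natCast_atTop_atTop
  have hev1 : ∀ᶠ n : ℕ in atTop, (((10 * r^2 : ℕ) : ℝ))^r ≤ Real.logb 2 n :=
    hlogb.eventually_ge_atTop _
  have hev2 : ∀ᶠ n : ℕ in atTop, 1 ≤ n := eventually_ge_atTop 1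
  apply squeeze_zero' (g := fun n : ℕ => (n:ℝ) ^ (-(9/10 : ℝ)))
  · filter_upwards with n; positivity
  · filter_upwards [hlarge, hev1, hev2] with n hQn hKn hn1
    obtain ⟨hQ0, hQ1⟩ := hQn
    set Q : ℝ := c * Real.logb 2 n / t n with hQdef
    set T : ℕ := t n with hT
    have hT0 : 0 < T := by
      rcases Nat.eq_zero_or_pos T with h | h
      · exfalso
        rw [hQdef, h] at hQ0
        simp at hQ0
      · exact h
    have hTR : (0:ℝ) < (T:ℝ) := by exact_mod_cast hT0
    have hnR : (0:ℝ) < (n:ℝ) := by exact_mod_cast hn1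
    have hlogpos : 0 < Real.logb 2 n := by
      by_contra h
      push_neg at h
      have : Q ≤ 0 := by
        rw [hQdef]
        apply div_nonpos_of_nonpos_of_nonneg
        · exact mul_nonpos_of_nonneg_of_nonpos hcpos.le h
        · exact hTR.le
      linarith
    -- T * r ≤ n - 1
    have hTr : T * r ≤ n - 1 :=
      sets_card_bound' (by omega) ⟨0, by omega⟩ (R n ⟨0, by omega⟩)
        (hdisj n _) (hnoti n _) (hcard n _)
    have hTn : T ≤ n := by
      have : T ≤ T * r := Nat.le_mul_of_pos_right T hr
      omega
    have hTnR : (T:ℝ) ≤ (n:ℝ) := by exact_mod_cast hTn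
    -- q
    set q : ℝ := Q ^ (1 / (r:ℝ)) with hqdef
    have hq0 : 0 < q := Real.rpow_pos_of_pos hQ0 _
    have hq1 : q < 1 := Real.rpow_lt_one hQ0.le hQ1 (by positivity)
    have hqr : q ^ r = Q := by
      rw [hqdef, ← Real.rpow_natCast (Q ^ (1 / (r:ℝ))) r, ← Real.rpow_mul hQ0.le,
        one_div, inv_mul_cancel₀ hrne, Real.rpow_one]
    -- w and m
    have hwle : (w n : ℝ) ≤ (1 - q) * n := by
      rw [hw n]
      exact Nat.floor_le (by nlinarith)
    have hwn : w n ≤ n := by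
      rw [hw n]
      calc ⌊(1 - q) * n⌋₊ ≤ ⌊(n:ℝ)⌋₊ := Nat.floor_le_floor (by nlinarith)
        _ = n := Nat.floor_natCast n
    set m : ℕ := n - w n with hm
    have hmcast : (m:ℝ) = (n:ℝ) - (w n : ℝ) := by
      rw [hm]; push_cast [Nat.cast_sub hwn]; ring
    have hmq : q * n ≤ (m:ℝ) := by rw [hmcast]; nlinarith
    -- q * n is large
    have hqn_pow : (((10 * r^2 : ℕ):ℝ))^r ≤ (q * n)^r := by
      have h1 : q^r * (n:ℝ) ≤ (q*n)^r := by
        rw [mul_pow]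
        have : (n:ℝ) ≤ (n:ℝ)^r := by
          calc (n:ℝ) = (n:ℝ)^1 := (pow_one _).symm
          _ ≤ (n:ℝ)^r := pow_le_pow_right₀ (by exact_mod_cast hn1) hr
        nlinarith [pow_pos hq0 r]
      have h2 : c * Real.logb 2 n ≤ q^r * n := by
        rw [hqr, hQdef]
        rw [div_mul_eq_mul_div, le_div_iff₀ hTR]
        exact mul_le_mul_of_nonneg_left hTnR (by positivity)
      have h3 : (((10 * r^2 : ℕ):ℝ))^r ≤ c * Real.logb 2 n := by
        calc (((10 * r^2 : ℕ):ℝ))^r ≤ Real.logb 2 n := hKn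
          _ = 1 * Real.logb 2 n := (one_mul _).symm
          _ ≤ c * Real.logb 2 n := by nlinarith
      linarith
    have hqn : ((10 * r^2 : ℕ):ℝ) ≤ q * n := by
      refine le_of_pow_le_pow_left₀ (by omega) (by positivity) hqn_pow
    have hr2R : (0:ℝ) < ((10 * r^2 : ℕ):ℝ) := by positivity
    -- r ≤ m
    have hrm : r ≤ m := by
      have h1 : (r:ℝ) ≤ ((10 * r^2 : ℕ):ℝ) := by
        push_cast; nlinarith
      have : (r:ℝ) ≤ (m:ℝ) := le_trans h1 (le_trans hqn hmq)
      exact_mod_cast this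
    have hmn : m ≤ n := Nat.sub_le n (w n)
    -- the ratio bound
    set x : ℝ := ((m - r + 1 : ℕ):ℝ) / ((n - r + 1 : ℕ):ℝ) with hxdef
    have hnum := num_le' hr hwn (hm ▸ hrm) (R n) (hdisj n) (hcard n)
    have hden : (0:ℝ) < ((univ.filter
        (fun Z : Fin n → Bool => erasureWt Z = w n)).card : ℝ) := by
      exact_mod_cast den_pos' (w n) hwn
    have hratio : ((univ.filter (fun Z : Fin n → Bool => erasureWt Z = w n ∧
            ∃ i : Fin n, ∀ j : Fin (t n), ∃ u ∈ R n i j, Z u = true)).card : ℝ)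
        / ((univ.filter (fun Z : Fin n → Bool => erasureWt Z = w n)).card : ℝ)
        ≤ (n:ℝ) * (1 - x ^ r) ^ T := by
      rw [div_le_iff₀ hden]
      exact hnum
    -- bounds on x
    have hMcast : ((m - r + 1 : ℕ):ℝ) = (m:ℝ) - r + 1 := by
      push_cast [Nat.cast_sub hrm]; ring
    have hNcast : ((n - r + 1 : ℕ):ℝ) = (n:ℝ) - r + 1 := by
      push_cast [Nat.cast_sub (le_trans hrm hmn)]; ring
    have hNpos : (0:ℝ) < ((n - r + 1 : ℕ):ℝ) := by positivity
    have hx1 : x ≤ 1 := by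
      rw [hxdef, div_le_one hNpos]
      exact_mod_cast Nat.add_le_add_right (Nat.sub_le_sub_right hmn r) 1
    have hx0 : 0 < x := by
      rw [hxdef]; positivity
    set u : ℝ := (r:ℝ) / (q * n) with hudef
    have hqnpos : (0:ℝ) < q * n := by positivity
    have hu0 : 0 ≤ u := by positivity
    have hru : (r:ℝ) * u ≤ 1/10 := by
      rw [hudef, mul_div_assoc']
      rw [div_le_iff₀ hqnpos]
      have : ((10 * r^2 : ℕ):ℝ) = 10 * (r:ℝ) * r := by push_cast; ring
      nlinarith
    have hu1 : u ≤ 1 := by nlinarith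
    have hxq : q * (1 - u) ≤ x := by
      have h1 : q * (1 - u) = (q * n - r) / n := by
        rw [hudef]; field_simp
      rw [h1, hxdef]
      apply div_le_div₀ (by positivity) _ hNpos _
      · rw [hMcast]; nlinarith
      · rw [hNcast]; nlinarith
    have hxr_lb : q ^ r * (9/10 : ℝ) ≤ x ^ r := by
      have hber : 1 - (r:ℝ) * u ≤ (1 - u) ^ r := by
        have := one_add_mul_le_pow (a := -u) (by linarith) r
        calc 1 - (r:ℝ) * u = 1 + r * (-u) := by ring
          _ ≤ (1 + (-u)) ^ r := this
          _ = (1 - u) ^ r := by ring_nf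
      have h1 : (9/10:ℝ) ≤ (1 - u)^r := by linarith
      have h2 : (q * (1 - u))^r ≤ x^r :=
        pow_le_pow_left₀ (mul_nonneg hq0.le (by linarith)) hxq r
      rw [mul_pow] at h2
      have h3 : q^r * (9/10 : ℝ) ≤ q^r * (1-u)^r :=
        mul_le_mul_of_nonneg_left h1 (pow_pos hq0 r).le
      linarith
    -- T * x^r is large
    have hTQ : (T:ℝ) * Q = c * Real.logb 2 n := by
      rw [hQdef]; field_simp
    have hTx : (9/10 : ℝ) * (c * Real.logb 2 n) ≤ (T:ℝ) * x ^ r := by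
      calc (9/10 : ℝ) * (c * Real.logb 2 n) = (T:ℝ) * (q^r * (9/10)) := by
            rw [hqr, ← hTQ]; ring
        _ ≤ (T:ℝ) * x^r := mul_le_mul_of_nonneg_left hxr_lb hTR.le
    have hxr1 : x ^ r ≤ 1 := pow_le_one₀ hx0.le hx1
    have hfin := final_bound n T c (x ^ r) hn1 (by positivity) hxr1 hc hlogpos.le hTx
    exact le_trans hratio hfin
  · exact (tendsto_rpow_neg_atTop (by norm_num)).comp tendsto_natCast_atTop_atTop
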